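/- Let G be a profinite group possessing a finite normal series 1 = G_0 ≤ G_1 ≤ ... ≤ G_h = G in which every factor G_{i+1}/G_i is either prosoluble or finite. Let C be the intersection of the centralizers in G of all the finite factors. Then C is an open prosoluble normal subgroup of G. -/

import Mathlib

open scoped Pointwise


/-- A topological group is prosoluble if every quotient by an open normal subgroup is
soluble (for a profinite group this says every finite continuous quotient is soluble). -/
def Prosoluble (G : Type*) [Group G] [TopologicalSpace G] : Prop :=
  ∀ (N : Subgroup G) (_ : N.Normal), IsOpen (N : Set G) → IsSolvable (G ⧸ N)

open scoped commutatorElement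

lemma aux_comm_mem_left {H : Type*} [Group H] {N : Subgroup H} (hN : N.Normal)
    {n : H} (hn : n ∈ N) (g : H) : ⁅n, g⁆ ∈ N := by
  have h : ⁅n, g⁆ = n * (g * n⁻¹ * g⁻¹) := by rw [commutatorElement_def]; group
  rw [h]; exact N.mul_mem hn (hN.conj_mem _ (N.inv_mem hn) g)

lemma aux_exists_openNormal_sub {G : Type*} [Group G] [TopologicalSpace G] [IsTopologicalGroup G]
    [CompactSpace G] [T2Space G] [TotallyDisconnectedSpace G] {U : Set G} (hU : IsOpen U)
    (h1 : (1:G) ∈ U) : ∃ W : Subgroup G, W.Normal ∧ IsOpen (W : Set G) ∧ (W : Set G) ⊆ U := by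
  obtain ⟨V, hV, h1V, hVU⟩ := compact_exists_isClopen_in_isOpen hU h1
  obtain ⟨H, hH⟩ := IsTopologicalGroup.exist_openNormalSubgroup_sub_clopen_nhds_of_one hV h1V
  exact ⟨H.toSubgroup, H.isNormal', H.isOpen', fun x hx => hVU (hH hx)⟩

/-- If a profinite group `G` has a finite normal series with every factor
either prosoluble or finite, then the intersection `C` of the centralizers of the finite
factors is an open prosoluble normal subgroup of `G`. Here the factor `G_{i+1}/G_i` is
realized as the image of `G_{i+1}` in `G/G_i`, and the centralizer of that factor is
`{g : G | [G_{i+1}, g] ≤ G_i}`. -/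
theorem stmt15 {G : Type*} [Group G] [TopologicalSpace G] [IsTopologicalGroup G]
    [CompactSpace G] [T2Space G] [TotallyDisconnectedSpace G]
    (k : ℕ) (Gs : Fin (k + 1) → Subgroup G) [hnormal : ∀ i, (Gs i).Normal]
    (hclosed : ∀ i, IsClosed ((Gs i : Subgroup G) : Set G))
    (hmono : Monotone Gs) (hbot : Gs 0 = ⊥) (htop : Gs (Fin.last k) = ⊤)
    (hfac : ∀ i : Fin k,
      Prosoluble ↥((Gs i.succ).map (QuotientGroup.mk' (Gs i.castSucc))) ∨
      Finite ↥((Gs i.succ).map (QuotientGroup.mk' (Gs i.castSucc)))) :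
    ∃ C : Subgroup G,
      (C : Set G) = {g : G |
        ∀ i : Fin k, Finite ↥((Gs i.succ).map (QuotientGroup.mk' (Gs i.castSucc))) →
          ∀ x ∈ Gs i.succ, ⁅x, g⁆ ∈ Gs i.castSucc} ∧
      C.Normal ∧ IsOpen (C : Set G) ∧ Prosoluble ↥C := by
  classical
  set Cset : Set G := {g : G |
      ∀ i : Fin k, Finite ↥((Gs i.succ).map (QuotientGroup.mk' (Gs i.castSucc))) →
        ∀ x ∈ Gs i.succ, ⁅x, g⁆ ∈ Gs i.castSucc} with hCsetdef
  have hone : (1:G) ∈ Cset := by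
    intro i _ x hx
    have h : ⁅x, (1:G)⁆ = 1 := by rw [commutatorElement_def]; group
    rw [h]; exact (Gs i.castSucc).one_mem
  have hmul : ∀ {a b : G}, a ∈ Cset → b ∈ Cset → a*b ∈ Cset := by
    intro a b ha hb i hfin x hx
    have h : ⁅x, a*b⁆ = ⁅x,a⁆ * (a * ⁅x,b⁆ * a⁻¹) := by
      simp only [commutatorElement_def]; group
    rw [h]
    exact (Gs i.castSucc).mul_mem (ha i hfin x hx)
      ((hnormal i.castSucc).conj_mem _ (hb i hfin x hx) a)
  have hinv : ∀ {a : G}, a ∈ Cset → a⁻¹ ∈ Cset := by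
    intro a ha i hfin x hx
    have h : ⁅x, a⁻¹⁆ = a⁻¹ * ⁅x,a⁆⁻¹ * (a⁻¹)⁻¹ := by
      simp only [commutatorElement_def]; group
    rw [h]
    exact (hnormal i.castSucc).conj_mem _ ((Gs i.castSucc).inv_mem (ha i hfin x hx)) a⁻¹
  set C : Subgroup G :=
    { carrier := Cset, one_mem' := hone, mul_mem' := fun h h' => hmul h h',
      inv_mem' := fun h => hinv h } with hCdef
  have hCnormal : C.Normal := by
    constructor
    intro g hg h i hfin x hx
    have key : ⁅x, h*g*h⁻¹⁆ = h * ⁅h⁻¹*x*h, g⁆ * h⁻¹ := by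
      simp only [commutatorElement_def]; group
    have hx' : h⁻¹*x*h ∈ Gs i.succ := by
      have := (hnormal i.succ).conj_mem x hx h⁻¹
      simpa using this
    rw [key]
    exact (hnormal i.castSucc).conj_mem _ (hg i hfin _ hx') h
  have hCopen : IsOpen (C : Set G) := by
    have heq : (C : Set G) = ⋂ i : Fin k, {g : G |
        Finite ↥((Gs i.succ).map (QuotientGroup.mk' (Gs i.castSucc))) →
        ∀ x ∈ Gs i.succ, ⁅x, g⁆ ∈ Gs i.castSucc} := by
      ext g; simp only [Set.mem_iInter]; rfl
    rw [heq]
    refine isOpen_iInter_of_finite fun i => ?_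
    by_cases hF : Finite ↥((Gs i.succ).map (QuotientGroup.mk' (Gs i.castSucc)))
    swap
    · have huniv : {g : G | Finite ↥((Gs i.succ).map (QuotientGroup.mk' (Gs i.castSucc))) →
          ∀ x ∈ Gs i.succ, ⁅x, g⁆ ∈ Gs i.castSucc} = Set.univ := by
        ext g
        simp only [Set.mem_setOf_eq, Set.mem_univ, iff_true]
        exact fun h => absurd h hF
      rw [huniv]; exact isOpen_univ
    · have hFfin : ((((Gs i.succ).map (QuotientGroup.mk' (Gs i.castSucc))) :
          Subgroup (G ⧸ Gs i.castSucc)) : Set (G ⧸ Gs i.castSucc)).Finite := by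
        haveI := hF
        exact Set.toFinite _
      have houtM : ∀ f ∈ (Gs i.succ).map (QuotientGroup.mk' (Gs i.castSucc)),
          Quotient.out f ∈ Gs i.succ := by
        intro f hf
        obtain ⟨m, hm, hmf⟩ := hf
        have he : m⁻¹ * Quotient.out f ∈ Gs i.castSucc := by
          rw [← QuotientGroup.eq, QuotientGroup.out_eq']
          exact hmf
        have hrw : Quotient.out f = m * (m⁻¹ * Quotient.out f) := by group
        rw [hrw]
        exact (Gs i.succ).mul_mem hm (hmono (Fin.castSucc_lt_succ (i := i)).le he)
      have hopenS : ∀ x ∈ Gs i.succ, IsOpen {g : G | ⁅x, g⁆ ∈ Gs i.castSucc} := by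
        intro x hx
        rw [← isClosed_compl_iff]
        have hcompl : {g : G | ⁅x, g⁆ ∈ Gs i.castSucc}ᶜ =
            ⋃ f ∈ ((((Gs i.succ).map (QuotientGroup.mk' (Gs i.castSucc)))) :
              Set (G ⧸ Gs i.castSucc)) \ {1},
              {g : G | ((⁅x, g⁆ : G) : G ⧸ Gs i.castSucc) = f} := by
          ext g
          simp only [Set.mem_compl_iff, Set.mem_setOf_eq, Set.mem_iUnion, Set.mem_diff,
            Set.mem_singleton_iff, exists_prop, SetLike.mem_coe]
          constructor
          · intro hg
            refine ⟨((⁅x, g⁆ : G) : G ⧸ Gs i.castSucc),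
              ⟨⟨⁅x,g⁆, aux_comm_mem_left (hnormal i.succ) hx g, rfl⟩, ?_⟩, rfl⟩
            intro h1
            exact hg ((QuotientGroup.eq_one_iff _).mp h1)
          · rintro ⟨f, ⟨hfF, hf1⟩, hgf⟩ hmem
            refine hf1 ?_
            rw [← hgf]
            exact (QuotientGroup.eq_one_iff _).mpr hmem
        rw [hcompl]
        refine Set.Finite.isClosed_biUnion (hFfin.subset Set.diff_subset) fun f hf => ?_
        have hset : {g : G | ((⁅x, g⁆ : G) : G ⧸ Gs i.castSucc) = f} =
            (fun g => (Quotient.out f)⁻¹ * (x * g * x⁻¹ * g⁻¹)) ⁻¹'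
              ((Gs i.castSucc : Subgroup G) : Set G) := by
          ext g
          simp only [Set.mem_setOf_eq, Set.mem_preimage, SetLike.mem_coe]
          rw [commutatorElement_def, ← QuotientGroup.eq, QuotientGroup.out_eq']
          exact eq_comm
        rw [hset]
        exact (hclosed _).preimage (by fun_prop)
      have hTi : {g : G | Finite ↥((Gs i.succ).map (QuotientGroup.mk' (Gs i.castSucc))) →
          ∀ x ∈ Gs i.succ, ⁅x, g⁆ ∈ Gs i.castSucc} =
          ⋂ f ∈ ((((Gs i.succ).map (QuotientGroup.mk' (Gs i.castSucc)))) :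
            Set (G ⧸ Gs i.castSucc)), {g : G | ⁅Quotient.out f, g⁆ ∈ Gs i.castSucc} := by
        ext g
        simp only [Set.mem_setOf_eq, Set.mem_iInter, SetLike.mem_coe]
        constructor
        · intro hg f hf
          exact hg hF _ (houtM f hf)
        · intro hg _ x hx
          have hfF : ((x : G) : G ⧸ Gs i.castSucc) ∈
              (Gs i.succ).map (QuotientGroup.mk' (Gs i.castSucc)) := ⟨x, hx, rfl⟩
          have h1 := hg _ hfF
          have hn : (Quotient.out ((x : G) : G ⧸ Gs i.castSucc))⁻¹ * x ∈ Gs i.castSucc := by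
            rw [← QuotientGroup.eq, QuotientGroup.out_eq']
          have key : ⁅x,g⁆ = (Quotient.out ((x : G) : G ⧸ Gs i.castSucc) *
              ⁅(Quotient.out ((x : G) : G ⧸ Gs i.castSucc))⁻¹ * x, g⁆ *
              (Quotient.out ((x : G) : G ⧸ Gs i.castSucc))⁻¹) *
              ⁅Quotient.out ((x : G) : G ⧸ Gs i.castSucc), g⁆ := by
            simp only [commutatorElement_def]; group
          rw [key]
          exact (Gs i.castSucc).mul_mem
            ((hnormal i.castSucc).conj_mem _
              (aux_comm_mem_left (hnormal i.castSucc) hn g) _) h1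
      rw [hTi]
      exact Set.Finite.isOpen_biInter hFfin fun f hf => hopenS _ (houtM f hf)
  have hCpro : Prosoluble ↥C := by
    intro N' hN' hNopen
    haveI := hN'
    set q : ↥C →* ↥C ⧸ N' := QuotientGroup.mk' N' with hq
    set Qj : Fin (k+1) → Subgroup (↥C ⧸ N') := fun j => ((Gs j).subgroupOf C).map q with hQj
    have hQnormal : ∀ j, (Qj j).Normal := fun j =>
      Subgroup.Normal.map ((hnormal j).subgroupOf C) q (QuotientGroup.mk'_surjective N')
    have hQmono : ∀ {a b : Fin (k+1)}, a ≤ b → Qj a ≤ Qj b := fun hab =>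
      Subgroup.map_mono (Subgroup.comap_mono (hmono hab))
    have key : ∀ j : Fin (k+1), Group.IsSolvable ↥(Qj j) := by
      intro j
      induction j using Fin.induction with
      | zero =>
        have hbot' : Qj 0 = ⊥ := by
          simp only [hQj, hbot, Subgroup.bot_subgroupOf, Subgroup.map_bot]
        rw [hbot']
        refine isSolvable_of_comm fun a b => ?_
        have ha := Subgroup.mem_bot.mp a.2
        have hb := Subgroup.mem_bot.mp b.2
        apply Subtype.ext
        simp only [Subgroup.coe_mul]
        rw [ha, hb]
      | succ i ih =>
        have hle : Qj i.castSucc ≤ Qj i.succ := hQmono (Fin.castSucc_lt_succ (i := i)).le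
        haveI hnormalF : ((Qj i.castSucc).subgroupOf (Qj i.succ)).Normal :=
          Subgroup.Normal.subgroupOf (hQnormal _) _
        set A : Subgroup G := C ⊓ Gs i.succ with hA
        have hAC : A ≤ C := inf_le_left
        have hmemQ : ∀ a : ↥A, q (Subgroup.inclusion hAC a) ∈ Qj i.succ := by
          intro a
          exact Subgroup.mem_map_of_mem q (by
            rw [Subgroup.mem_subgroupOf]
            exact a.2.2)
        set ρ : ↥A →* ↥(Qj i.succ) :=
          MonoidHom.codRestrict (q.comp (Subgroup.inclusion hAC)) _ hmemQ with hρ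
        set ψ : ↥A →* ↥(Qj i.succ) ⧸ (Qj i.castSucc).subgroupOf (Qj i.succ) :=
          (QuotientGroup.mk' _).comp ρ with hψ
        have hψker : ∀ a : ↥A, (Subgroup.inclusion hAC a : G) ∈ Gs i.castSucc → ψ a = 1 := by
          intro a hmem
          show (QuotientGroup.mk (ρ a) : _) = 1
          rw [QuotientGroup.eq_one_iff, Subgroup.mem_subgroupOf]
          exact Subgroup.mem_map_of_mem q (by rw [Subgroup.mem_subgroupOf]; exact hmem)
        have hψsurj : Function.Surjective ψ := by
          intro y
          obtain ⟨b, rfl⟩ := QuotientGroup.mk'_surjective _ y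
          obtain ⟨c, hc, hcq⟩ := b.2
          refine ⟨⟨(c : G), ⟨c.2, hc⟩⟩, ?_⟩
          have hval : ρ ⟨(c : G), ⟨c.2, hc⟩⟩ = b := by
            apply Subtype.ext
            show q (Subgroup.inclusion hAC ⟨(c : G), ⟨c.2, hc⟩⟩) = (b : ↥C ⧸ N')
            have h1 : Subgroup.inclusion hAC (⟨(c : G), ⟨c.2, hc⟩⟩ : ↥A) = c := rfl
            rw [h1, hcq]
          show QuotientGroup.mk' _ (ρ _) = QuotientGroup.mk' _ b
          rw [hval]
        have hFsol : Group.IsSolvable (↥(Qj i.succ) ⧸ (Qj i.castSucc).subgroupOf (Qj i.succ)) := by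
          rcases hfac i with hp | hfin
          · -- prosoluble factor case
            have hAclosed : IsClosed ((A : Subgroup G) : Set G) := by
              have hAeq : ((A : Subgroup G) : Set G) = (C : Set G) ∩ (Gs i.succ : Set G) := rfl
              rw [hAeq]
              exact (C.isClosed_of_isOpen hCopen).inter (hclosed _)
            have hkerψ_open : IsOpen ((ψ.ker : Subgroup ↥A) : Set ↥A) := by
              have hsub : ((N'.map C.subtype).subgroupOf A) ≤ ψ.ker := by
                intro a ha
                rw [Subgroup.mem_subgroupOf] at ha
                obtain ⟨n, hn, hna⟩ := ha
                have hincl : Subgroup.inclusion hAC a = n := by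
                  apply Subtype.ext
                  exact hna.symm
                rw [MonoidHom.mem_ker]
                show (QuotientGroup.mk (ρ a) : _) = 1
                rw [QuotientGroup.eq_one_iff, Subgroup.mem_subgroupOf]
                show q (Subgroup.inclusion hAC a) ∈ Qj i.castSucc
                rw [hincl]
                have hq1 : q n = 1 := (QuotientGroup.eq_one_iff n).mpr hn
                rw [hq1]
                exact (Qj i.castSucc).one_mem
              refine Subgroup.isOpen_mono hsub ?_
              have him : IsOpen ((N'.map C.subtype : Subgroup G) : Set G) := by
                rw [Subgroup.coe_map, Subgroup.coe_subtype]
                exact hCopen.isOpenMap_subtype_val _ hNopen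
              have hpre : (((N'.map C.subtype).subgroupOf A : Subgroup ↥A) : Set ↥A) =
                  (Subtype.val) ⁻¹' ((N'.map C.subtype : Subgroup G) : Set G) := by
                rw [Subgroup.subgroupOf, Subgroup.coe_comap, Subgroup.coe_subtype]
              rw [hpre]
              exact him.preimage continuous_subtype_val
            set Kset : Set G := Subtype.val '' ((ψ.ker : Subgroup ↥A) : Set ↥A) with hKsetdef
            obtain ⟨U, hUopen, hUeq⟩ := isOpen_induced_iff.mp hkerψ_open
            have hKeq : Kset = ((A : Subgroup G) : Set G) ∩ U := by
              rw [hKsetdef, ← hUeq]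
              ext g
              constructor
              · rintro ⟨a, ha, rfl⟩
                exact ⟨a.2, ha⟩
              · rintro ⟨hgA, hgU⟩
                exact ⟨⟨g, hgA⟩, hgU, rfl⟩
            set T : Set G := ((A : Subgroup G) : Set G) \ Kset with hTdef
            have hTclosed : IsClosed T := by
              rw [hTdef, hKeq]
              have hdiff : ((A : Subgroup G) : Set G) \ (((A : Subgroup G) : Set G) ∩ U) =
                  ((A : Subgroup G) : Set G) ∩ Uᶜ := by
                ext g
                simp only [Set.mem_diff, Set.mem_inter_iff, Set.mem_compl_iff]
                tauto
              rw [hdiff]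
              exact hAclosed.inter (isClosed_compl_iff.mpr hUopen)
            have hScompact : IsCompact (T * ((Gs i.castSucc : Subgroup G) : Set G)) :=
              (hTclosed.isCompact).mul ((hclosed _).isCompact)
            have h1S : (1:G) ∉ T * ((Gs i.castSucc : Subgroup G) : Set G) := by
              intro hmem
              rw [Set.mem_mul] at hmem
              obtain ⟨t, ht, n, hn, htn⟩ := hmem
              have htA : t ∈ A := ht.1
              have htN : t ∈ Gs i.castSucc := by
                have hteq : t = n⁻¹ := eq_inv_of_mul_eq_one_left htn
                rw [hteq]
                exact (Gs i.castSucc).inv_mem hn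
              refine ht.2 ⟨⟨t, htA⟩, ?_, rfl⟩
              show ψ _ = 1
              exact hψker ⟨t, htA⟩ htN
            obtain ⟨W, hWn, hWopen, hWsub⟩ := aux_exists_openNormal_sub
              (isOpen_compl_iff.mpr hScompact.isClosed) h1S
            set mkb := QuotientGroup.mk' (Gs i.castSucc) with hmkb
            have hDopen : IsOpen ((W.map mkb : Subgroup _) : Set (G ⧸ Gs i.castSucc)) := by
              rw [Subgroup.coe_map]
              exact QuotientGroup.isOpenMap_coe _ hWopen
            haveI hDnormal : (W.map mkb).Normal := hWn.map mkb (QuotientGroup.mk'_surjective _)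
            set Wp := (W.map mkb).subgroupOf ((Gs i.succ).map mkb) with hWpdef
            haveI hWpnormal : Wp.Normal := Subgroup.Normal.subgroupOf hDnormal _
            have hWpopen : IsOpen (Wp : Set ↥((Gs i.succ).map mkb)) := by
              rw [hWpdef, Subgroup.subgroupOf, Subgroup.coe_comap, Subgroup.coe_subtype]
              exact hDopen.preimage continuous_subtype_val
            have hsolP := hp Wp hWpnormal hWpopen
            set θ0 : ↥A →* ↥((Gs i.succ).map mkb) :=
              MonoidHom.codRestrict (mkb.comp A.subtype) _
                (fun a => Subgroup.mem_map_of_mem mkb a.2.2) with hθ0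
            set θ : ↥A →* ↥((Gs i.succ).map mkb) ⧸ Wp := (QuotientGroup.mk' Wp).comp θ0 with hθ
            have hkerθ : θ.ker ≤ ψ.ker := by
              intro a ha
              by_contra hk
              have haK : (a : G) ∉ Kset := by
                intro hmem
                obtain ⟨a', ha', hval⟩ := hmem
                exact hk ((Subtype.ext hval : a' = a) ▸ ha')
              have hmemD : mkb (a : G) ∈ W.map mkb := by
                have hθ0a : θ0 a ∈ Wp := by
                  rw [MonoidHom.mem_ker] at ha
                  exact (QuotientGroup.eq_one_iff (θ0 a)).mp ha
                rw [hWpdef, Subgroup.mem_subgroupOf] at hθ0a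
                exact hθ0a
              obtain ⟨w, hw, hwa⟩ := hmemD
              have hn2 : w⁻¹ * (a : G) ∈ Gs i.castSucc := by
                rw [← QuotientGroup.eq]
                exact hwa
              have hwS : w ∈ T * ((Gs i.castSucc : Subgroup G) : Set G) := by
                rw [Set.mem_mul]
                exact ⟨(a : G), ⟨a.2, haK⟩, (w⁻¹ * (a : G))⁻¹,
                  (Gs i.castSucc).inv_mem hn2, by group⟩
              exact (hWsub hw) hwS
            haveI : Group.IsSolvable (↥((Gs i.succ).map mkb) ⧸ Wp) := hsolP
            haveI hsr : Group.IsSolvable ↥θ.range := inferInstance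
            haveI : Group.IsSolvable (↥A ⧸ θ.ker) :=
              solvable_of_solvable_injective
                (f := (QuotientGroup.quotientKerEquivRange θ).toMonoidHom)
                (MulEquiv.injective _)
            have hlift : ∀ a ∈ θ.ker, ψ a = 1 := fun a ha => MonoidHom.mem_ker.mp (hkerθ ha)
            have hφsurj : Function.Surjective (QuotientGroup.lift θ.ker ψ hlift) := by
              intro y
              obtain ⟨a, rfl⟩ := hψsurj y
              exact ⟨QuotientGroup.mk a, QuotientGroup.lift_mk' _ _ a⟩
            exact solvable_of_surjective hφsurj
          · refine isSolvable_of_comm fun x y => ?_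
            obtain ⟨a, rfl⟩ := hψsurj x
            obtain ⟨b, rfl⟩ := hψsurj y
            rw [← commutatorElement_eq_one_iff_mul_comm, ← map_commutatorElement]
            refine hψker _ ?_
            have hvc : ((Subgroup.inclusion hAC ⁅a, b⁆ : ↥C) : G) = ⁅(a : G), (b : G)⁆ := rfl
            rw [hvc]
            exact b.2.1 i hfin (a : G) a.2.2
        haveI hsolsub : Group.IsSolvable ↥((Qj i.castSucc).subgroupOf (Qj i.succ)) := by
          haveI := ih
          exact solvable_of_solvable_injective
            (f := (Subgroup.subgroupOfEquivOfLe hle).toMonoidHom) (MulEquiv.injective _)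
        haveI := hFsol
        exact solvable_of_ker_le_range ((Qj i.castSucc).subgroupOf (Qj i.succ)).subtype
          (QuotientGroup.mk' ((Qj i.castSucc).subgroupOf (Qj i.succ)))
          (by rw [QuotientGroup.ker_mk', Subgroup.range_subtype])
    have htopQ : Qj (Fin.last k) = ⊤ := by
      simp only [hQj, htop, Subgroup.top_subgroupOf]
      exact Subgroup.map_top_of_surjective _ (QuotientGroup.mk'_surjective N')
    have hsoltop : Group.IsSolvable ↥(⊤ : Subgroup (↥C ⧸ N')) := htopQ ▸ key (Fin.last k)
    haveI := hsoltop
    exact solvable_of_surjective (f := (Subgroup.topEquiv (G := ↥C ⧸ N')).toMonoidHom)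
      (MulEquiv.surjective _)
  exact ⟨C, rfl, hCnormal, hCopen, hCpro⟩
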